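/- The Fredholm index is locally constant on the set of Fredholm operators: if F : X → Y is a Fredholm operator between Banach spaces, there is ε > 0 such that every bounded operator G with ‖G - F‖ < ε is Fredholm with index G = index F. -/

import Mathlib

open Module

/-- A bounded operator between Banach spaces is Fredholm if it has
finite-dimensional kernel, closed range, and finite-dimensional cokernel. -/
def IsFredholm {X Y : Type*} [NormedAddCommGroup X] [NormedSpace ℝ X]
    [NormedAddCommGroup Y] [NormedSpace ℝ Y] (F : X →L[ℝ] Y) : Prop :=
  FiniteDimensional ℝ (LinearMap.ker (F : X →ₗ[ℝ] Y)) ∧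
  IsClosed (LinearMap.range (F : X →ₗ[ℝ] Y) : Set Y) ∧
  FiniteDimensional ℝ (Y ⧸ LinearMap.range (F : X →ₗ[ℝ] Y))

/-- The Fredholm index: `dim ker F - dim coker F`. -/
noncomputable def fredholmIndex {X Y : Type*} [NormedAddCommGroup X] [NormedSpace ℝ X]
    [NormedAddCommGroup Y] [NormedSpace ℝ Y] (F : X →L[ℝ] Y) : ℤ :=
  (finrank ℝ (LinearMap.ker (F : X →ₗ[ℝ] Y)) : ℤ) -
    (finrank ℝ (Y ⧸ LinearMap.range (F : X →ₗ[ℝ] Y)) : ℤ)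

section Aux

variable {X Y : Type*} [NormedAddCommGroup X] [NormedSpace ℝ X] [CompleteSpace X]
  [NormedAddCommGroup Y] [NormedSpace ℝ Y] [CompleteSpace Y]

lemma isClosed_sup_fd (W N V : Submodule ℝ Y) (hWN : IsCompl W N)
    (hW : IsClosed (W : Set Y)) (hN : IsClosed (N : Set Y)) [FiniteDimensional ℝ V] :
    IsClosed ((W ⊔ V : Submodule ℝ Y) : Set Y) := by
  set π : Y →L[ℝ] N := N.linearProjOfClosedCompl W hWN.symm hN hW with hπ
  have hπcoe : ⇑π = ⇑(N.projectionOnto W hWN.symm) :=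
    Submodule.coe_continuous_linearProjOfClosedCompl' hWN.symm hN hW
  set π' : Y →L[ℝ] Y := N.subtypeL.comp π with hπ'
  have hπ'W : ∀ w ∈ W, π' w = 0 := by
    intro w hw
    simp only [hπ', ContinuousLinearMap.comp_apply, hπcoe]
    rw [Submodule.projectionOnto_apply_of_mem_right hWN.symm hw]
    simp
  have hsub : ∀ y : Y, y - π' y ∈ W := by
    intro y
    have : N.projectionOnto W hWN.symm (y - π' y) = 0 := by
      have h1 : N.projectionOnto W hWN.symm (π' y) = π y := by
        simp [hπ']
      rw [map_sub, h1, ← hπcoe]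
      simp
    have := (Submodule.ker_projectionOnto hWN.symm) ▸
      (LinearMap.mem_ker.2 this)
    exact this
  set T : Submodule ℝ Y := V.map (π' : Y →ₗ[ℝ] Y) with hT
  haveI : FiniteDimensional ℝ T := Module.Finite.map V _
  have hTclosed : IsClosed (T : Set Y) := T.closed_of_finiteDimensional
  have hset : ((W ⊔ V : Submodule ℝ Y) : Set Y) = ⇑π' ⁻¹' (T : Set Y) := by
    ext y
    simp only [Set.mem_preimage, SetLike.mem_coe]
    constructor
    · intro hy
      obtain ⟨w, hw, v, hv, rfl⟩ := Submodule.mem_sup.1 hy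
      have : π' (w + v) = π' v := by rw [map_add, hπ'W w hw, zero_add]
      rw [this]
      exact ⟨v, hv, rfl⟩
    · rintro ⟨v, hv, hvy⟩
      rw [ContinuousLinearMap.coe_coe] at hvy
      have h1 : y - π' y ∈ W := hsub y
      have h2 : v - π' v ∈ W := hsub v
      have hy : ((y - π' y) - (v - π' v)) + v = y := by
        rw [hvy]; abel
      rw [← hy]
      exact Submodule.add_mem _ (Submodule.mem_sup_left (W.sub_mem h1 h2))
        (Submodule.mem_sup_right hv)
  rw [hset]
  exact hTclosed.preimage π'.continuous

lemma key_lemma (G : X →L[ℝ] Y) (K X₀ : Submodule ℝ X) (N : Submodule ℝ Y)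
    [FiniteDimensional ℝ K] [FiniteDimensional ℝ N]
    (hKX : IsCompl K X₀)
    (hinj : ∀ x ∈ X₀, G x = 0 → x = 0)
    (hWN : IsCompl (X₀.map (G : X →ₗ[ℝ] Y)) N)
    (hWc : IsClosed ((X₀.map (G : X →ₗ[ℝ] Y)) : Set Y)) :
    IsFredholm G ∧ fredholmIndex G =
      (finrank ℝ K : ℤ) - (finrank ℝ N : ℤ) := by
  set G' : X →ₗ[ℝ] Y := (G : X →ₗ[ℝ] Y) with hG'
  set W : Submodule ℝ Y := X₀.map G' with hWdef
  set V : Submodule ℝ Y := K.map G' with hVdef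
  haveI : FiniteDimensional ℝ V := Module.Finite.map K _
  have hN : IsClosed (N : Set Y) := N.closed_of_finiteDimensional
  -- range decomposition
  have hR : LinearMap.range G' = W ⊔ V := by
    rw [← Submodule.map_top, ← hKX.sup_eq_top, Submodule.map_sup, sup_comm]
  have hRc : IsClosed ((LinearMap.range G' : Submodule ℝ Y) : Set Y) := by
    rw [hR]; exact isClosed_sup_fd W N V hWN hWc hN
  -- the finite-dimensional comparison map
  set φ : K →ₗ[ℝ] (Y ⧸ W) := W.mkQ.comp (G'.comp K.subtype) with hφ
  set projK : X →ₗ[ℝ] K := K.projectionOnto X₀ hKX with hprojK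
  have hprojmem : ∀ x : X, x - (projK x : X) ∈ X₀ := by
    intro x
    have := Submodule.projection_add_projection_eq_self hKX x
    have h2 : x - (projK x : X) = ((X₀.projectionOnto K hKX.symm x : X)) :=
      sub_eq_of_eq_add' this.symm
    rw [h2]; exact SetLike.coe_mem _
  -- kernel comparison
  set θ0 : (LinearMap.ker G') →ₗ[ℝ] K := projK.comp (LinearMap.ker G').subtype with hθ0
  have hmemθ : ∀ g : LinearMap.ker G', θ0 g ∈ LinearMap.ker φ := by
    intro g
    have hg : G' (g : X) = 0 := g.2
    have hx0 : (g : X) - (projK (g : X) : X) ∈ X₀ := hprojmem _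
    have : G' (projK (g : X) : X) = - G' ((g : X) - (projK (g : X) : X)) := by
      rw [map_sub, hg]; abel
    simp only [LinearMap.mem_ker, hφ, LinearMap.comp_apply, Submodule.coe_subtype, hθ0]
    rw [this]
    rw [Submodule.mkQ_apply, Submodule.Quotient.mk_eq_zero]
    exact W.neg_mem (Submodule.mem_map_of_mem hx0)
  set θ : (LinearMap.ker G') →ₗ[ℝ] (LinearMap.ker φ) :=
    θ0.codRestrict (LinearMap.ker φ) hmemθ with hθ
  have hθinj : Function.Injective θ := by
    rw [injective_iff_map_eq_zero]
    intro g hg0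
    have h0 : projK (g : X) = 0 := by
      have := Subtype.ext_iff.1 hg0
      simpa [hθ, hθ0] using this
    have hgX : (g : X) ∈ X₀ := by
      have := hprojmem (g : X)
      rw [h0] at this
      simpa using this
    have hGg : G (g : X) = 0 := g.2
    have : (g : X) = 0 := hinj _ hgX hGg
    exact Subtype.ext this
  have hθsurj : Function.Surjective θ := by
    rintro ⟨k, hk⟩
    have hGk : G' (k : X) ∈ W := by
      have := LinearMap.mem_ker.1 hk
      simp only [hφ, LinearMap.comp_apply, Submodule.coe_subtype,
        Submodule.mkQ_apply] at this
      exact (Submodule.Quotient.mk_eq_zero W).1 this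
    obtain ⟨x₀, hx₀, hGx₀⟩ := hGk
    have hgker : G' ((k : X) - x₀) = 0 := by rw [map_sub, hGx₀, sub_self]
    refine ⟨⟨(k : X) - x₀, hgker⟩, ?_⟩
    apply Subtype.ext
    have hcoe : ((θ ⟨(k : X) - x₀, hgker⟩ : K)) = projK ((k : X) - x₀) := rfl
    rw [hcoe, map_sub, hprojK]
    rw [Submodule.projectionOnto_apply_left hKX k,
      Submodule.projectionOnto_apply_of_mem_right hKX hx₀, sub_zero]
  haveI instkerG' : FiniteDimensional ℝ (LinearMap.ker G') :=
    FiniteDimensional.of_injective θ hθinj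
  have hkerrank : finrank ℝ (LinearMap.ker G') = finrank ℝ (LinearMap.ker φ) :=
    LinearEquiv.finrank_eq (LinearEquiv.ofBijective θ ⟨hθinj, hθsurj⟩)
  have hrangeφ : LinearMap.range φ = V.map W.mkQ := by
    rw [hφ, LinearMap.range_comp, LinearMap.range_comp, Submodule.range_subtype]
  have hle : W ≤ LinearMap.ker (LinearMap.range G').mkQ := by
    rw [Submodule.ker_mkQ, hR]; exact le_sup_left
  set ψ : (Y ⧸ W) →ₗ[ℝ] (Y ⧸ LinearMap.range G') :=
    W.liftQ (LinearMap.range G').mkQ hle with hψ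
  haveI fdYW : FiniteDimensional ℝ (Y ⧸ W) :=
    (W.quotientEquivOfIsCompl N hWN).symm.finiteDimensional
  have hYW : finrank ℝ (Y ⧸ W) = finrank ℝ N :=
    (W.quotientEquivOfIsCompl N hWN).finrank_eq
  have hψrange : LinearMap.range ψ = ⊤ := by
    rw [hψ, Submodule.range_liftQ, Submodule.range_mkQ]
  have hψsurj : Function.Surjective ψ := LinearMap.range_eq_top.1 hψrange
  haveI fdcoker : FiniteDimensional ℝ (Y ⧸ LinearMap.range G') :=
    Module.Finite.of_surjective ψ hψsurj
  have hkerψ : LinearMap.ker ψ = LinearMap.range φ := by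
    rw [hψ, Submodule.ker_liftQ, Submodule.ker_mkQ, hR, Submodule.map_sup,
      Submodule.mkQ_map_self, bot_sup_eq, hrangeφ]
  have e1 : finrank ℝ (LinearMap.range φ) + finrank ℝ (LinearMap.ker φ) = finrank ℝ K :=
    LinearMap.finrank_range_add_finrank_ker φ
  have e2 : finrank ℝ (LinearMap.range ψ) + finrank ℝ (LinearMap.ker ψ)
      = finrank ℝ (Y ⧸ W) :=
    LinearMap.finrank_range_add_finrank_ker ψ
  rw [hψrange, finrank_top, hkerψ, hYW] at e2
  have hkG : LinearMap.ker (G : X →ₗ[ℝ] Y) = LinearMap.ker G' := rfl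
  have hrGclosed : IsClosed ((LinearMap.range (G : X →ₗ[ℝ] Y) : Submodule ℝ Y) : Set Y) := hRc
  refine ⟨⟨?_, hrGclosed, ?_⟩, ?_⟩
  · rw [hkG]; exact instkerG'
  · exact fdcoker
  · show (finrank ℝ (LinearMap.ker (G : X →ₗ[ℝ] Y)) : ℤ) -
        (finrank ℝ (Y ⧸ LinearMap.range (G : X →ₗ[ℝ] Y)) : ℤ)
      = (finrank ℝ K : ℤ) - (finrank ℝ N : ℤ)
    rw [hkG, hkerrank]
    rw [← hG']
    omega


set_option synthInstance.maxHeartbeats 1000000 in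
set_option maxHeartbeats 1000000 in
theorem fredholmIndex_locally_constant'
    (F : X →L[ℝ] Y) (hF : IsFredholm F) :
    ∃ ε > 0, ∀ G : X →L[ℝ] Y, ‖G - F‖ < ε →
      IsFredholm G ∧ fredholmIndex G = fredholmIndex F := by
  obtain ⟨hker, hclosed, hcoker⟩ := hF
  set F' : X →ₗ[ℝ] Y := (F : X →ₗ[ℝ] Y) with hF'
  set K : Submodule ℝ X := LinearMap.ker F' with hK
  haveI instK : FiniteDimensional ℝ K := hker
  obtain ⟨X₀, hX₀closed, hKX⟩ :=
    (Submodule.ClosedComplemented.of_finiteDimensional K).exists_isClosed_isCompl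
  set R : Submodule ℝ Y := LinearMap.range F' with hRdef
  have hRclosed : IsClosed (R : Set Y) := hclosed
  haveI instQ : FiniteDimensional ℝ (Y ⧸ R) := hcoker
  obtain ⟨N, hNclosed, hRN⟩ :=
    (Submodule.ClosedComplemented.of_quotient_finiteDimensional hRclosed).exists_isClosed_isCompl
  haveI instN : FiniteDimensional ℝ N := (R.quotientEquivOfIsCompl N hRN).finiteDimensional
  -- the image of X₀ under F is the whole range
  have hmapK : K.map F' = ⊥ := by
    rw [eq_bot_iff]
    rintro y ⟨x, hx, rfl⟩
    exact hx
  have hWF : X₀.map F' = R := by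
    rw [hRdef, ← Submodule.map_top, ← hKX.sup_eq_top, Submodule.map_sup, hmapK, bot_sup_eq]
  -- completeness of the pieces
  haveI : CompleteSpace X₀ := hX₀closed.completeSpace_coe
  haveI : CompleteSpace N := FiniteDimensional.complete ℝ N
  -- the parametrized operator
  set Tm : (X →L[ℝ] Y) → ((X₀ × N) →L[ℝ] Y) := fun H =>
    (H.comp (X₀.subtypeL.comp (ContinuousLinearMap.fst ℝ X₀ N))) +
      (N.subtypeL.comp (ContinuousLinearMap.snd ℝ X₀ N)) with hTmdef
  have hTm : ∀ (H : X →L[ℝ] Y) (p : X₀ × N), Tm H p = H p.1 + (p.2 : Y) := fun H p => rfl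
  -- Tm F is bijective
  have hker0 : LinearMap.ker (Tm F : (X₀ × N) →ₗ[ℝ] Y) = ⊥ := by
    rw [eq_bot_iff]
    rintro ⟨x, n⟩ hp
    have hp0 : F (x : X) + (n : Y) = 0 := hp
    have hFx : F (x : X) ∈ R := LinearMap.mem_range_self F' (x : X)
    have hFxN : F (x : X) ∈ N := by
      have : F (x : X) = -(n : Y) := eq_neg_of_add_eq_zero_left hp0
      rw [this]; exact N.neg_mem n.2
    have hFx0 : F (x : X) = 0 := Submodule.disjoint_def.1 hRN.disjoint _ hFx hFxN
    have hn0 : (n : Y) = 0 := by rw [hFx0, zero_add] at hp0; exact hp0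
    have hxK : (x : X) ∈ K := hFx0
    have hx0 : (x : X) = 0 := Submodule.disjoint_def.1 hKX.disjoint _ hxK x.2
    refine Submodule.mem_bot ℝ |>.2 ?_
    exact Prod.ext (Subtype.ext hx0) (Subtype.ext hn0)
  have hrange0 : LinearMap.range (Tm F : (X₀ × N) →ₗ[ℝ] Y) = ⊤ := by
    rw [eq_top_iff]
    rintro y -
    have hy : y ∈ R ⊔ N := by rw [hRN.sup_eq_top]; trivial
    obtain ⟨r, hr, n, hn, rfl⟩ := Submodule.mem_sup.1 hy
    obtain ⟨x, rfl⟩ := hr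
    have hx : x ∈ K ⊔ X₀ := by rw [hKX.sup_eq_top]; trivial
    obtain ⟨k, hk, x₀, hx₀, rfl⟩ := Submodule.mem_sup.1 hx
    refine ⟨(⟨x₀, hx₀⟩, ⟨n, hn⟩), ?_⟩
    have : F' (k + x₀) = F x₀ := by
      rw [map_add]
      have : F' k = 0 := hk
      rw [this, zero_add]; rfl
    rw [ContinuousLinearMap.coe_coe, hTm]
    simp only [this]
  set T : (X₀ × N) ≃L[ℝ] Y := ContinuousLinearEquiv.ofBijective (Tm F) hker0 hrange0 with hT
  have hTcoe : ∀ p, T p = Tm F p := fun p => rfl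
  set C : ℝ := ‖(T.symm : Y →L[ℝ] (X₀ × N))‖ with hC
  have hC0 : 0 ≤ C := ContinuousLinearMap.opNorm_nonneg _
  refine ⟨(C + 1)⁻¹, by positivity, fun G hG => ?_⟩
  -- the perturbed operator is close
  have hTmdiff : ‖Tm G - Tm F‖ ≤ ‖G - F‖ := by
    refine ContinuousLinearMap.opNorm_le_bound _ (norm_nonneg _) fun p => ?_
    have h1 : (Tm G - Tm F) p = (G - F) (p.1 : X) := by
      simp only [ContinuousLinearMap.sub_apply, hTm]
      abel
    rw [h1]
    calc ‖(G - F) (p.1 : X)‖ ≤ ‖G - F‖ * ‖(p.1 : X)‖ := (G - F).le_opNorm _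
      _ ≤ ‖G - F‖ * ‖p‖ := by
          have : ‖(p.1 : X)‖ ≤ ‖p‖ := norm_fst_le p
          exact mul_le_mul_of_nonneg_left this (norm_nonneg _)
  set A : (X₀ × N) →L[ℝ] (X₀ × N) := (T.symm : Y →L[ℝ] (X₀ × N)).comp (Tm G) with hA
  have honesubA : (1 : (X₀ × N) →L[ℝ] (X₀ × N)) - A
      = (T.symm : Y →L[ℝ] (X₀ × N)).comp (Tm F - Tm G) := by
    apply ContinuousLinearMap.ext; intro p
    simp only [ContinuousLinearMap.sub_apply, ContinuousLinearMap.one_apply, hA,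
      ContinuousLinearMap.comp_apply, map_sub, ContinuousLinearEquiv.coe_coe]
    rw [← hTcoe p, ContinuousLinearEquiv.symm_apply_apply]
  have hnorm1A : ‖(1 : (X₀ × N) →L[ℝ] (X₀ × N)) - A‖ < 1 := by
    rw [honesubA]
    have hb1 : ‖(T.symm : Y →L[ℝ] (X₀ × N)).comp (Tm F - Tm G)‖ ≤ C * ‖Tm F - Tm G‖ :=
      ContinuousLinearMap.opNorm_comp_le _ _
    have hb2 : ‖Tm F - Tm G‖ = ‖Tm G - Tm F‖ := by exact norm_sub_rev (Tm F) (Tm G)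
    have hb3 : C * ‖Tm G - Tm F‖ ≤ C * ‖G - F‖ := mul_le_mul_of_nonneg_left hTmdiff hC0
    have hb4 : C * ‖G - F‖ ≤ C * (C + 1)⁻¹ := mul_le_mul_of_nonneg_left hG.le hC0
    have hb5 : C * (C + 1)⁻¹ < 1 := by
      rw [← div_eq_mul_inv]
      exact (div_lt_one (by linarith)).2 (by linarith)
    calc ‖(T.symm : Y →L[ℝ] (X₀ × N)).comp (Tm F - Tm G)‖
        ≤ C * ‖Tm F - Tm G‖ := hb1
      _ = C * ‖Tm G - Tm F‖ := by rw [hb2]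
      _ ≤ C * ‖G - F‖ := hb3
      _ ≤ C * (C + 1)⁻¹ := hb4
      _ < 1 := hb5
  set u : ((X₀ × N) →L[ℝ] (X₀ × N))ˣ := Units.oneSub (R := (X₀ × N) →L[ℝ] (X₀ × N)) ((1 : (X₀ × N) →L[ℝ] (X₀ × N)) - A) (by exact hnorm1A) with hu
  have huval : (u : (X₀ × N) →L[ℝ] (X₀ × N)) = A := by
    show (1 : (X₀ × N) →L[ℝ] (X₀ × N)) - ((1 : (X₀ × N) →L[ℝ] (X₀ × N)) - A) = A
    abel
  set eA : (X₀ × N) ≃L[ℝ] (X₀ × N) := ContinuousLinearEquiv.unitsEquiv ℝ (X₀ × N) u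
    with heAdef
  set e : (X₀ × N) ≃L[ℝ] Y := eA.trans T with hedef
  have he : ∀ p, e p = Tm G p := by
    intro p
    rw [hedef, ContinuousLinearEquiv.trans_apply]
    have h1 : eA p = A p := by
      rw [heAdef, ContinuousLinearEquiv.unitsEquiv_apply, huval]
    rw [h1]
    have h2 : A p = T.symm (Tm G p) := rfl
    rw [h2]
    exact T.apply_symm_apply _
  -- G is injective on X₀
  have hinjG : ∀ x ∈ X₀, G x = 0 → x = 0 := by
    intro x hx hGx
    have h0 : e (⟨x, hx⟩, (0 : N)) = 0 := by
      rw [he, hTm]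
      simp only [Submodule.coe_zero, add_zero]
      exact hGx
    have h1 : e (⟨x, hx⟩, (0 : N)) = e 0 := by rw [h0, map_zero]
    have h2 : ((⟨x, hx⟩, (0 : N)) : X₀ × N) = 0 := e.injective h1
    exact Subtype.ext_iff.1 (Prod.ext_iff.1 h2).1
  -- the image of X₀ under G is complementary to N
  have hWNG : IsCompl (X₀.map (G : X →ₗ[ℝ] Y)) N := by
    constructor
    · rw [disjoint_iff_inf_le]
      rintro y ⟨⟨x, hx, rfl⟩, hyN⟩
      have h0 : e (⟨x, hx⟩, -(⟨(G : X →ₗ[ℝ] Y) x, hyN⟩ : N)) = 0 := by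
        rw [he, hTm]
        simp
      have h1 : e (⟨x, hx⟩, -(⟨(G : X →ₗ[ℝ] Y) x, hyN⟩ : N)) = e 0 := by
        rw [h0, map_zero]
      have h2 : ((⟨x, hx⟩, -(⟨(G : X →ₗ[ℝ] Y) x, hyN⟩ : N)) : X₀ × N) = 0 := e.injective h1
      have hx0 : x = 0 := Subtype.ext_iff.1 (Prod.ext_iff.1 h2).1
      simp [hx0]
    · rw [codisjoint_iff_le_sup]
      rintro y -
      set p := e.symm y with hp
      have hy : y = G ((p.1 : X)) + (p.2 : Y) := by
        rw [← hTm G p, ← he p, hp, ContinuousLinearEquiv.apply_symm_apply]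
      rw [hy]
      exact Submodule.add_mem_sup (Submodule.mem_map_of_mem p.1.2) p.2.2
  -- the image of X₀ under G is closed
  have hWcG : IsClosed ((X₀.map (G : X →ₗ[ℝ] Y)) : Set Y) := by
    have hset : ((X₀.map (G : X →ₗ[ℝ] Y)) : Set Y)
        = (fun y => (e.symm y).2) ⁻¹' {(0 : N)} := by
      ext y
      simp only [Set.mem_preimage, Set.mem_singleton_iff, SetLike.mem_coe]
      constructor
      · rintro ⟨x, hx, rfl⟩
        have h1 : (G : X →ₗ[ℝ] Y) x = e (⟨x, hx⟩, (0 : N)) := by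
          rw [he, hTm]; simp
        rw [h1, ContinuousLinearEquiv.symm_apply_apply]
      · intro h
        have hy : y = G ((e.symm y).1 : X) + ((e.symm y).2 : Y) := by
          rw [← hTm G (e.symm y), ← he (e.symm y), ContinuousLinearEquiv.apply_symm_apply]
        rw [h] at hy
        simp only [Submodule.coe_zero, add_zero] at hy
        exact ⟨_, (e.symm y).1.2, hy.symm⟩
    rw [hset]
    exact isClosed_singleton.preimage (continuous_snd.comp e.symm.continuous)
  -- conclude via the key lemma, applied to both G and F
  have hG' := key_lemma G K X₀ N hKX hinjG hWNG hWcG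
  have hinjF : ∀ x ∈ X₀, F x = 0 → x = 0 := by
    intro x hx hFx
    exact Submodule.disjoint_def.1 hKX.disjoint x hFx hx
  have hWNF : IsCompl (X₀.map (F : X →ₗ[ℝ] Y)) N := by rw [← hF', hWF]; exact hRN
  have hWcF : IsClosed ((X₀.map (F : X →ₗ[ℝ] Y)) : Set Y) := by
    rw [← hF', hWF]; exact hRclosed
  have hF2 := key_lemma F K X₀ N hKX hinjF hWNF hWcF
  exact ⟨hG'.1, by rw [hG'.2, hF2.2]⟩

end Aux

/-- The Fredholm index is locally constant: every bounded operator sufficiently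
close in operator norm to a Fredholm operator is Fredholm with the same index. -/
theorem fredholmIndex_locally_constant
    {X Y : Type*} [NormedAddCommGroup X] [NormedSpace ℝ X] [CompleteSpace X]
    [NormedAddCommGroup Y] [NormedSpace ℝ Y] [CompleteSpace Y]
    (F : X →L[ℝ] Y) (hF : IsFredholm F) :
    ∃ ε > 0, ∀ G : X →L[ℝ] Y, ‖G - F‖ < ε →
      IsFredholm G ∧ fredholmIndex G = fredholmIndex F :=
  fredholmIndex_locally_constant' F hF
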